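/- For the two-dimensional Gaussian Gibbs sampler: let μ be the centered Gaussian on ℝ² with covariance matrix [[1, r],[r, 1]], 0 < r < 1, and let P((x₁,x₂), ·) be the law of (Y₁, Y₂) where Y₁ = r x₂ + Z₁ and Y₂ = r Y₁ + Z₂ with Z₁, Z₂ independent N(0, 1−r²). Then for all x = (x₁,x₂), x' = (x₁',x₂'), W_{1,d_{L¹}}(P(x,·), P(x',·)) = (r + r²)|x₂ − x₂'|, where d_{L¹} is the ℓ¹ metric on ℝ². In particular P is a W₁-contraction if and only if r + r² < 1. -/

import Mathlib

open MeasureTheory ProbabilityTheory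

/-- The `L¹`-Wasserstein "distance" associated to a cost `ρ`, defined as the infimum of
`∫ ρ(x,y) dπ` over all couplings `π` of `μ` and `ν`. -/
noncomputable def W1 {X : Type*} [MeasurableSpace X] (ρ : X → X → ℝ)
    (μ ν : Measure X) : ℝ :=
  ⨅ π : {π : Measure (X × X) //
      IsProbabilityMeasure π ∧ π.map Prod.fst = μ ∧ π.map Prod.snd = ν},
    ∫ p, ρ p.1 p.2 ∂(π : Measure (X × X))

/-- The `ℓ¹` metric on `ℝ²`. -/
noncomputable def dL1R2 (a b : ℝ × ℝ) : ℝ := |a.1 - b.1| + |a.2 - b.2|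

/-- The one-sweep Gibbs sampler kernel for the centered bivariate Gaussian with
covariance `[[1,r],[r,1]]`: starting from `x = (x₁,x₂)`, it is the law of
`(Y₁, Y₂)` with `Y₁ = r x₂ + Z₁`, `Y₂ = r Y₁ + Z₂`, where `Z₁, Z₂` are i.i.d.
`N(0, 1 − r²)`. -/
noncomputable def gaussGibbsKernel (r : ℝ) (x : ℝ × ℝ) : Measure (ℝ × ℝ) :=
  ((gaussianReal 0 (Real.toNNReal (1 - r ^ 2))).prod
      (gaussianReal 0 (Real.toNNReal (1 - r ^ 2)))).map
    (fun z : ℝ × ℝ => (r * x.2 + z.1, r * (r * x.2 + z.1) + z.2))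

/-- for the two-dimensional Gaussian Gibbs sampler,
`W₁(P(x,·), P(x',·)) = (r + r²) |x₂ − x₂'|` in the `ℓ¹` metric; in particular `P` is a
`W₁`-contraction if and only if `r + r² < 1`. -/
lemma integrable_id_gaussianReal' {v : NNReal} (hv : v ≠ 0) :
    Integrable (fun x : ℝ => x) (gaussianReal 0 v) := by
  rw [gaussianReal_of_var_ne_zero _ hv]
  rw [integrable_withDensity_iff (measurable_gaussianPDF _ _)
    (Filter.Eventually.of_forall fun x => ENNReal.ofReal_lt_top)]
  have hb : (0:ℝ) < ((2:ℝ) * (v:ℝ))⁻¹ := by positivity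
  have := (integrable_mul_exp_neg_mul_sq hb).const_mul ((Real.sqrt (2 * Real.pi * v))⁻¹)
  apply this.congr
  refine Filter.Eventually.of_forall fun x => ?_
  simp only [gaussianPDF, gaussianPDFReal,
    ENNReal.toReal_ofReal (by positivity : (0:ℝ) ≤ (Real.sqrt (2 * Real.pi * v))⁻¹ * Real.exp (- (x - 0)^2 / (2 * v)))]
  rw [sub_zero]
  ring_nf

lemma integral_id_gaussianReal' (v : NNReal) :
    ∫ x, x ∂(gaussianReal 0 v) = 0 := by
  have hmap : (gaussianReal 0 v).map ((-1 : ℝ) * ·) = gaussianReal 0 v := by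
    rw [gaussianReal_map_const_mul]
    have h1 : (NNReal.mk ((-1:ℝ)^2) (sq_nonneg _)) = 1 := by ext; norm_num
    rw [h1]
    norm_num
  have h : ∫ x, x ∂(gaussianReal 0 v) = ∫ x, (-1 : ℝ) * x ∂(gaussianReal 0 v) := by
    conv_lhs => rw [← hmap]
    rw [integral_map (f := fun x : ℝ => x) (by fun_prop) aestronglyMeasurable_id]
  simp only [neg_one_mul] at h
  rw [integral_neg] at h
  linarith

lemma integrable_comp_of_map {α β : Type*} [MeasurableSpace α] [MeasurableSpace β]
    {π : Measure α} {μ : Measure β} {g : α → β} (hg : Measurable g) (h : π.map g = μ)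
    {f : β → ℝ} (hf : Measurable f) (hi : Integrable f μ) :
    Integrable (fun a => f (g a)) π := by
  rw [← h] at hi
  exact (integrable_map_measure hf.aestronglyMeasurable hg.aemeasurable).mp hi

lemma integral_comp_of_map {α β : Type*} [MeasurableSpace α] [MeasurableSpace β]
    {π : Measure α} {μ : Measure β} {g : α → β} (hg : Measurable g) (h : π.map g = μ)
    {f : β → ℝ} (hf : Measurable f) :
    ∫ a, f (g a) ∂π = ∫ y, f y ∂μ := by
  rw [← h, integral_map hg.aemeasurable hf.aestronglyMeasurable]

lemma gauss_gibbs_W1_eq (r : ℝ) (hr0 : 0 < r) (hr1 : r < 1) (x x' : ℝ × ℝ) :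
    W1 dL1R2 (gaussGibbsKernel r x) (gaussGibbsKernel r x') = (r + r ^ 2) * |x.2 - x'.2| := by
  have hv : Real.toNNReal (1 - r ^ 2) ≠ 0 := by
    rw [← pos_iff_ne_zero, Real.toNNReal_pos]
    nlinarith
  set v : NNReal := Real.toNNReal (1 - r ^ 2)
  set G : Measure ℝ := gaussianReal 0 v with hG
  set ν₀ : Measure (ℝ × ℝ) := G.prod G with hν₀
  have hPν₀ : IsProbabilityMeasure ν₀ := by rw [hν₀]; infer_instance
  set T : ℝ × ℝ → ℝ × ℝ → ℝ × ℝ :=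
    fun y z => (r * y.2 + z.1, r * (r * y.2 + z.1) + z.2) with hTdef
  have hT : ∀ y, Measurable (T y) := fun y => by
    rw [hTdef]; fun_prop
  have hK : ∀ y, gaussGibbsKernel r y = ν₀.map (T y) := fun y => rfl
  -- basic integrability on ν₀
  have hid : Integrable (fun t : ℝ => t) G := integrable_id_gaussianReal' hv
  have hmapfst : ν₀.map Prod.fst = G := by
    rw [hν₀, Measure.map_fst_prod]; simp
  have hmapsnd : ν₀.map Prod.snd = G := by
    rw [hν₀, Measure.map_snd_prod]; simp
  have hz1 : Integrable (fun z : ℝ × ℝ => z.1) ν₀ :=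
    integrable_comp_of_map measurable_fst hmapfst measurable_id hid
  have hz2 : Integrable (fun z : ℝ × ℝ => z.2) ν₀ :=
    integrable_comp_of_map measurable_snd hmapsnd measurable_id hid
  have hiz1 : ∫ z : ℝ × ℝ, z.1 ∂ν₀ = 0 := by
    have := (integral_comp_of_map (f := fun t : ℝ => t) measurable_fst hmapfst
      measurable_id).trans (integral_id_gaussianReal' v)
    simpa using this
  have hiz2 : ∫ z : ℝ × ℝ, z.2 ∂ν₀ = 0 := by
    have := (integral_comp_of_map (f := fun t : ℝ => t) measurable_snd hmapsnd
      measurable_id).trans (integral_id_gaussianReal' v)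
    simpa using this
  -- integrability and first moments for the kernels
  have hKfst_int : ∀ y, Integrable (fun w : ℝ × ℝ => w.1) (gaussGibbsKernel r y) := by
    intro y
    rw [hK y]
    refine (integrable_map_measure measurable_fst.aestronglyMeasurable
      (hT y).aemeasurable).mpr ?_
    have : Integrable (fun z : ℝ × ℝ => r * y.2 + z.1) ν₀ := (integrable_const _).add hz1
    exact this
  have hKsnd_int : ∀ y, Integrable (fun w : ℝ × ℝ => w.2) (gaussGibbsKernel r y) := by
    intro y
    rw [hK y]
    refine (integrable_map_measure measurable_snd.aestronglyMeasurable
      (hT y).aemeasurable).mpr ?_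
    have h2' : ((fun w : ℝ × ℝ => w.2) ∘ T y)
        = fun z : ℝ × ℝ => r * r * y.2 + (r * z.1 + z.2) := by
      funext z; simp [hTdef]; ring
    rw [h2']
    have hz12 : Integrable (fun z : ℝ × ℝ => r * z.1 + z.2) ν₀ := (hz1.const_mul r).add hz2
    have : Integrable (fun z : ℝ × ℝ => r * r * y.2 + (r * z.1 + z.2)) ν₀ :=
      (integrable_const _).add hz12
    exact this
  have hKfst_val : ∀ y, ∫ w : ℝ × ℝ, w.1 ∂(gaussGibbsKernel r y) = r * y.2 := by
    intro y
    rw [hK y, integral_map (hT y).aemeasurable measurable_fst.aestronglyMeasurable]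
    have : (fun z : ℝ × ℝ => (T y z).1) = fun z : ℝ × ℝ => r * y.2 + z.1 := by
      funext z; simp [hTdef]
    rw [show (∫ z : ℝ × ℝ, (T y z).1 ∂ν₀) = ∫ z : ℝ × ℝ, (r * y.2 + z.1) ∂ν₀ by
      rw [this]]
    rw [show (∫ z : ℝ × ℝ, (r * y.2 + z.1) ∂ν₀)
        = (∫ _z : ℝ × ℝ, (r * y.2) ∂ν₀) + ∫ z : ℝ × ℝ, z.1 ∂ν₀ from
      integral_add (integrable_const _) hz1, hiz1, integral_const]
    simp
  have hKsnd_val : ∀ y, ∫ w : ℝ × ℝ, w.2 ∂(gaussGibbsKernel r y) = r ^ 2 * y.2 := by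
    intro y
    rw [hK y, integral_map (hT y).aemeasurable measurable_snd.aestronglyMeasurable]
    have h2' : (fun z : ℝ × ℝ => (T y z).2)
        = fun z : ℝ × ℝ => r ^ 2 * y.2 + (r * z.1 + z.2) := by
      funext z; simp [hTdef]; ring
    rw [show (∫ z : ℝ × ℝ, (T y z).2 ∂ν₀)
        = ∫ z : ℝ × ℝ, (r ^ 2 * y.2 + (r * z.1 + z.2)) ∂ν₀ by rw [h2']]
    have hz1r : Integrable (fun z : ℝ × ℝ => r * z.1) ν₀ := hz1.const_mul r
    have hz12 : Integrable (fun z : ℝ × ℝ => r * z.1 + z.2) ν₀ := hz1r.add hz2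
    rw [show (∫ z : ℝ × ℝ, (r ^ 2 * y.2 + (r * z.1 + z.2)) ∂ν₀)
        = (∫ _z : ℝ × ℝ, (r ^ 2 * y.2) ∂ν₀) + ∫ z : ℝ × ℝ, (r * z.1 + z.2) ∂ν₀ from
      integral_add (integrable_const _) hz12]
    rw [show (∫ z : ℝ × ℝ, (r * z.1 + z.2) ∂ν₀)
        = (∫ z : ℝ × ℝ, r * z.1 ∂ν₀) + ∫ z : ℝ × ℝ, z.2 ∂ν₀ from integral_add hz1r hz2]
    rw [show (∫ z : ℝ × ℝ, r * z.1 ∂ν₀) = r * ∫ z : ℝ × ℝ, z.1 ∂ν₀ from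
      integral_const_mul r _, hiz1, hiz2, integral_const]
    simp
  -- the synchronous coupling
  set S : ℝ × ℝ → (ℝ × ℝ) × (ℝ × ℝ) := fun z => (T x z, T x' z) with hSdef
  have hS : Measurable S := (hT x).prodMk (hT x')
  set π₀ : Measure ((ℝ × ℝ) × (ℝ × ℝ)) := ν₀.map S with hπ₀def
  have hπ₀prob : IsProbabilityMeasure π₀ := Measure.isProbabilityMeasure_map hS.aemeasurable
  have hπ₀fst : π₀.map Prod.fst = gaussGibbsKernel r x := by
    rw [hπ₀def, Measure.map_map measurable_fst hS, hK x]
    rfl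
  have hπ₀snd : π₀.map Prod.snd = gaussGibbsKernel r x' := by
    rw [hπ₀def, Measure.map_map measurable_snd hS, hK x']
    rfl
  have hcostmeas : Measurable (fun p : (ℝ × ℝ) × (ℝ × ℝ) => dL1R2 p.1 p.2) := by
    unfold dL1R2; fun_prop
  have hπ₀cost : ∫ p, dL1R2 p.1 p.2 ∂π₀ = (r + r ^ 2) * |x.2 - x'.2| := by
    rw [hπ₀def, integral_map hS.aemeasurable hcostmeas.aestronglyMeasurable]
    have hpt : ∀ z : ℝ × ℝ, dL1R2 (S z).1 (S z).2 = (r + r ^ 2) * |x.2 - x'.2| := by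
      intro z
      simp only [hSdef, hTdef, dL1R2]
      have e1 : r * x.2 + z.1 - (r * x'.2 + z.1) = r * (x.2 - x'.2) := by ring
      have e2 : r * (r * x.2 + z.1) + z.2 - (r * (r * x'.2 + z.1) + z.2)
          = r ^ 2 * (x.2 - x'.2) := by ring
      rw [e1, e2, abs_mul, abs_mul, abs_of_pos hr0, abs_of_pos (pow_pos hr0 2)]
      ring
    rw [show (∫ z, dL1R2 (S z).1 (S z).2 ∂ν₀)
        = ∫ _z : ℝ × ℝ, ((r + r ^ 2) * |x.2 - x'.2|) ∂ν₀ by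
      exact integral_congr_ae (Filter.Eventually.of_forall hpt)]
    rw [integral_const]
    simp
  haveI hne : Nonempty {π : Measure ((ℝ × ℝ) × (ℝ × ℝ)) //
      IsProbabilityMeasure π ∧ π.map Prod.fst = gaussGibbsKernel r x ∧
        π.map Prod.snd = gaussGibbsKernel r x'} :=
    ⟨⟨π₀, hπ₀prob, hπ₀fst, hπ₀snd⟩⟩
  have hbdd : BddBelow (Set.range fun π : {π : Measure ((ℝ × ℝ) × (ℝ × ℝ)) //
      IsProbabilityMeasure π ∧ π.map Prod.fst = gaussGibbsKernel r x ∧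
        π.map Prod.snd = gaussGibbsKernel r x'} =>
      ∫ p, dL1R2 p.1 p.2 ∂(π : Measure ((ℝ × ℝ) × (ℝ × ℝ)))) := by
    refine ⟨0, ?_⟩
    rintro b ⟨π, rfl⟩
    exact integral_nonneg fun p => add_nonneg (abs_nonneg _) (abs_nonneg _)
  unfold W1
  apply le_antisymm
  · exact hπ₀cost ▸ ciInf_le hbdd ⟨π₀, hπ₀prob, hπ₀fst, hπ₀snd⟩
  · refine le_ciInf ?_
    rintro ⟨π, hπprob, hπ1, hπ2⟩
    simp only
    have hA : Integrable (fun p : (ℝ × ℝ) × (ℝ × ℝ) => p.1.1) π :=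
      integrable_comp_of_map measurable_fst hπ1 measurable_fst (hKfst_int x)
    have hB : Integrable (fun p : (ℝ × ℝ) × (ℝ × ℝ) => p.1.2) π :=
      integrable_comp_of_map measurable_fst hπ1 measurable_snd (hKsnd_int x)
    have hC : Integrable (fun p : (ℝ × ℝ) × (ℝ × ℝ) => p.2.1) π :=
      integrable_comp_of_map measurable_snd hπ2 measurable_fst (hKfst_int x')
    have hD : Integrable (fun p : (ℝ × ℝ) × (ℝ × ℝ) => p.2.2) π :=
      integrable_comp_of_map measurable_snd hπ2 measurable_snd (hKsnd_int x')
    have iA : ∫ p, p.1.1 ∂π = r * x.2 := by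
      have := (integral_comp_of_map (f := fun w : ℝ × ℝ => w.1) measurable_fst hπ1
        measurable_fst).trans (hKfst_val x)
      simpa using this
    have iB : ∫ p, p.1.2 ∂π = r ^ 2 * x.2 := by
      have := (integral_comp_of_map (f := fun w : ℝ × ℝ => w.2) measurable_fst hπ1
        measurable_snd).trans (hKsnd_val x)
      simpa using this
    have iC : ∫ p, p.2.1 ∂π = r * x'.2 := by
      have := (integral_comp_of_map (f := fun w : ℝ × ℝ => w.1) measurable_snd hπ2
        measurable_fst).trans (hKfst_val x')
      simpa using this
    have iD : ∫ p, p.2.2 ∂π = r ^ 2 * x'.2 := by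
      have := (integral_comp_of_map (f := fun w : ℝ × ℝ => w.2) measurable_snd hπ2
        measurable_snd).trans (hKsnd_val x')
      simpa using this
    have hh : Integrable (fun p : (ℝ × ℝ) × (ℝ × ℝ) =>
        (p.1.1 + p.1.2) - (p.2.1 + p.2.2)) π := (hA.add hB).sub (hC.add hD)
    have ih : ∫ p, ((p.1.1 + p.1.2) - (p.2.1 + p.2.2)) ∂π
        = (r + r ^ 2) * (x.2 - x'.2) := by
      have hAB : Integrable (fun p : (ℝ × ℝ) × (ℝ × ℝ) => p.1.1 + p.1.2) π := hA.add hB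
      have hCD : Integrable (fun p : (ℝ × ℝ) × (ℝ × ℝ) => p.2.1 + p.2.2) π := hC.add hD
      rw [show (∫ p, ((p.1.1 + p.1.2) - (p.2.1 + p.2.2)) ∂π)
          = (∫ p, (p.1.1 + p.1.2) ∂π) - ∫ p, (p.2.1 + p.2.2) ∂π from integral_sub hAB hCD]
      rw [show (∫ p, (p.1.1 + p.1.2) ∂π) = (∫ p, p.1.1 ∂π) + ∫ p, p.1.2 ∂π from
        integral_add hA hB]
      rw [show (∫ p, (p.2.1 + p.2.2) ∂π) = (∫ p, p.2.1 ∂π) + ∫ p, p.2.2 ∂π from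
        integral_add hC hD]
      rw [iA, iB, iC, iD]
      ring
    have hcostInt : Integrable (fun p : (ℝ × ℝ) × (ℝ × ℝ) => dL1R2 p.1 p.2) π := by
      simp only [dL1R2]
      exact (hA.sub hC).abs.add (hB.sub hD).abs
    calc (r + r ^ 2) * |x.2 - x'.2| = |(r + r ^ 2) * (x.2 - x'.2)| := by
          rw [abs_mul, abs_of_nonneg (by positivity : (0:ℝ) ≤ r + r ^ 2)]
      _ = |∫ p, ((p.1.1 + p.1.2) - (p.2.1 + p.2.2)) ∂π| := by rw [ih]
      _ = ‖∫ p, ((p.1.1 + p.1.2) - (p.2.1 + p.2.2)) ∂π‖ := (Real.norm_eq_abs _).symm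
      _ ≤ ∫ p, ‖(p.1.1 + p.1.2) - (p.2.1 + p.2.2)‖ ∂π := norm_integral_le_integral_norm _
      _ ≤ ∫ p, dL1R2 p.1 p.2 ∂π := by
          refine integral_mono hh.norm hcostInt fun p => ?_
          simp only [Real.norm_eq_abs, dL1R2]
          have e : (p.1.1 + p.1.2) - (p.2.1 + p.2.2)
              = (p.1.1 - p.2.1) + (p.1.2 - p.2.2) := by ring
          rw [e]
          exact abs_add_le _ _

theorem gauss_gibbs_wasserstein (r : ℝ) (hr0 : 0 < r) (hr1 : r < 1) :
    (∀ x x' : ℝ × ℝ,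
      W1 dL1R2 (gaussGibbsKernel r x) (gaussGibbsKernel r x') = (r + r ^ 2) * |x.2 - x'.2|) ∧
    ((∃ κ : ℝ, 0 ≤ κ ∧ κ < 1 ∧ ∀ x y : ℝ × ℝ,
        W1 dL1R2 (gaussGibbsKernel r x) (gaussGibbsKernel r y) ≤ κ * dL1R2 x y) ↔
      r + r ^ 2 < 1) := by
  refine ⟨fun x x' => gauss_gibbs_W1_eq r hr0 hr1 x x', ?_, ?_⟩
  · rintro ⟨κ, hκ0, hκ1, hκ⟩
    have h := hκ ((0:ℝ), (1:ℝ)) ((0:ℝ), (0:ℝ))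
    rw [gauss_gibbs_W1_eq r hr0 hr1] at h
    simp [dL1R2] at h
    linarith
  · intro h
    refine ⟨r + r ^ 2, by positivity, h, fun x y => ?_⟩
    rw [gauss_gibbs_W1_eq r hr0 hr1]
    have hle : |x.2 - y.2| ≤ dL1R2 x y := by
      simp only [dL1R2]
      exact le_add_of_nonneg_left (abs_nonneg _)
    exact mul_le_mul_of_nonneg_left hle (by positivity)
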